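/- Consider n agents, each with a pair-demand valuation given by item weights, and a set of items M with |M| ≥ 2n. Run a two-stage picking procedure: in stage 1, agents 1, 2, ..., n in increasing order each pick a remaining item maximizing their single-item weight; in stage 2, agents n, n−1, ..., 1 in decreasing order each pick a remaining item maximizing their single-item weight; leftover items are given arbitrarily. Then the resulting allocation satisfies PMMS: for every pair of agents i, j, v_i(X_i) ≥ μ_i(X_i ∪ X_j). -/

import Mathlib

open Finset

/-- Pair-demand valuation: the best sum of at most two item weights in the bundle. -/
noncomputable def pd {α : Type*} [DecidableEq α] (w : α → ℝ) (S : Finset α) : ℝ :=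
  (S.powerset.filter fun T => T.card ≤ 2).sup' ⟨∅, by simp⟩ fun T => ∑ j ∈ T, w j

/-- Two-part maximin share: max over partitions (A, S \ A) of S of the min value. -/
noncomputable def mu {α : Type*} [DecidableEq α] (v : Finset α → ℝ) (S : Finset α) : ℝ :=
  S.powerset.sup' ⟨∅, Finset.empty_mem_powerset S⟩ fun A => min (v A) (v (S \ A))

/-- The items remaining before agent `i`'s pick in stage 1
(agents pick in increasing order of indices). -/
def stage1Pool {α : Type*} [DecidableEq α] {n : ℕ} (M : Finset α)
    (g : Fin n → α) (i : Fin n) : Finset α :=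
  M \ ((Finset.univ.filter fun k => k < i).image g)

/-- The items remaining before agent `i`'s pick in stage 2
(agents pick in decreasing order of indices). -/
def stage2Pool {α : Type*} [DecidableEq α] {n : ℕ} (M : Finset α)
    (g h : Fin n → α) (i : Fin n) : Finset α :=
  (M \ (Finset.univ.image g)) \ ((Finset.univ.filter fun k => i < k).image h)

lemma pd_le_of {α : Type*} [DecidableEq α] (w : α → ℝ) (S : Finset α) (a b : ℝ)
    (hb0 : 0 ≤ b) (hba : b ≤ a) (e : α)
    (ha : ∀ x ∈ S, w x ≤ a) (hB : ∀ x ∈ S, x ≠ e → w x ≤ b) :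
    pd w S ≤ a + b := by
  apply Finset.sup'_le
  intro T hT
  simp only [mem_filter, mem_powerset] at hT
  obtain ⟨hTS, hT2⟩ := hT
  by_cases he : e ∈ T
  · rw [← Finset.add_sum_erase T w he]
    have h1 : ∑ j ∈ T.erase e, w j ≤ (T.erase e).card • b := by
      apply Finset.sum_le_card_nsmul
      intro x hx
      exact hB x (hTS (Finset.mem_of_mem_erase hx)) (Finset.ne_of_mem_erase hx)
    have h2 : (T.erase e).card ≤ 1 := by
      have := Finset.card_erase_of_mem he
      omega
    have h3 : (T.erase e).card • b ≤ 1 • b := by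
      exact nsmul_le_nsmul_left hb0 h2
    have h4 := ha e (hTS he)
    simp only [one_nsmul] at h3
    linarith
  · have h1 : ∑ j ∈ T, w j ≤ T.card • b := by
      apply Finset.sum_le_card_nsmul
      intro x hx
      exact hB x (hTS hx) (fun hxe => he (hxe ▸ hx))
    have h3 : T.card • b ≤ 2 • b := nsmul_le_nsmul_left hb0 hT2
    simp only [nsmul_eq_mul, Nat.cast_ofNat] at h1 h3
    linarith

theorem stmt5 {α : Type*} [DecidableEq α] (n : ℕ) (M : Finset α)
    (hM : 2 * n ≤ M.card)
    (w : Fin n → α → ℝ) (hw : ∀ i g, 0 ≤ w i g)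
    (g h : Fin n → α)
    -- stage 1: each agent picks a remaining item maximizing their weight
    (hg_mem : ∀ i, g i ∈ stage1Pool M g i)
    (hg_max : ∀ i, ∀ x ∈ stage1Pool M g i, w i x ≤ w i (g i))
    -- stage 2: in reversed order, each agent picks a remaining item maximizing their weight
    (hh_mem : ∀ i, h i ∈ stage2Pool M g h i)
    (hh_max : ∀ i, ∀ x ∈ stage2Pool M g h i, w i x ≤ w i (h i))
    -- resulting allocation: a partition of M in which agent i holds its two picks,
    -- leftover items are distributed arbitrarily
    (Y : Fin n → Finset α)
    (hY_sub : ∀ i, Y i ⊆ M)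
    (hY_disj : ∀ i j, i ≠ j → Disjoint (Y i) (Y j))
    (hY_cover : Finset.univ.biUnion Y = M)
    (hY_picks : ∀ i, g i ∈ Y i ∧ h i ∈ Y i) :
    ∀ i j, i ≠ j → pd (w i) (Y i) ≥ mu (pd (w i)) (Y i ∪ Y j) := by
  intro i j hij
  set S := Y i ∪ Y j with hS
  have hSM : S ⊆ M := Finset.union_subset (hY_sub i) (hY_sub j)
  -- basic facts about picks
  have hgM : ∀ k, g k ∈ M := fun k => (Finset.mem_sdiff.mp (hg_mem k)).1
  have hg_ne : ∀ k m : Fin n, k < m → g k ≠ g m := by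
    intro k m hkm hEq
    have h2 := Finset.mem_sdiff.mp (hg_mem m)
    exact h2.2 (Finset.mem_image.mpr ⟨k, by simp [hkm], hEq⟩)
  have hh_not_img : ∀ k, h k ∉ Finset.univ.image g := by
    intro k hk
    have h2 := Finset.mem_sdiff.mp (hh_mem k)
    exact (Finset.mem_sdiff.mp h2.1).2 hk
  have hhM : ∀ k, h k ∈ M := fun k =>
    (Finset.mem_sdiff.mp (Finset.mem_sdiff.mp (hh_mem k)).1).1
  have hh_ne : ∀ k m : Fin n, k < m → h m ≠ h k := by
    intro k m hkm hEq
    have h2 := Finset.mem_sdiff.mp (hh_mem k)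
    exact h2.2 (Finset.mem_image.mpr ⟨m, by simp [hkm], hEq⟩)
  have hgh : g i ≠ h i := by
    intro hEq
    exact hh_not_img i (hEq ▸ Finset.mem_image_of_mem g (Finset.mem_univ i))
  -- ownership lemma
  have hmemY : ∀ x ∈ S, ∀ k, x ∈ Y k → k = i ∨ k = j := by
    intro x hx k hk
    by_contra hc
    push_neg at hc
    rcases Finset.mem_union.mp hx with hxi | hxj
    · exact (Finset.disjoint_left.mp (hY_disj k i hc.1) hk) hxi
    · exact (Finset.disjoint_left.mp (hY_disj k j hc.2) hk) hxj
  set a := w i (g i) with ha_def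
  set b := w i (h i) with hb_def
  have hb0 : 0 ≤ b := hw i (h i)
  have hba : b ≤ a := by
    apply hg_max i
    rw [stage1Pool, Finset.mem_sdiff]
    refine ⟨hhM i, fun hc => ?_⟩
    obtain ⟨k, _, hk⟩ := Finset.mem_image.mp hc
    exact hh_not_img i (hk ▸ Finset.mem_image_of_mem g (Finset.mem_univ k))
  -- key bound a: anything in S other than g j is ≤ a
  have key_a : ∀ x ∈ S, x ≠ g j → w i x ≤ a := by
    intro x hxS hxgj
    apply hg_max i
    rw [stage1Pool, Finset.mem_sdiff]
    refine ⟨hSM hxS, fun hc => ?_⟩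
    obtain ⟨k, hk, hkx⟩ := Finset.mem_image.mp hc
    rw [Finset.mem_filter] at hk
    rcases hmemY x hxS k (hkx ▸ (hY_picks k).1) with e | e
    · exact absurd hk.2 (e ▸ lt_irrefl i)
    · exact hxgj (e ▸ hkx.symm)
  -- in case i < j, even g j is ≤ a
  have extra_gj : i < j → w i (g j) ≤ a := by
    intro hij'
    apply hg_max i
    rw [stage1Pool, Finset.mem_sdiff]
    refine ⟨hgM j, fun hc => ?_⟩
    obtain ⟨k, hk, hkx⟩ := Finset.mem_image.mp hc
    rw [Finset.mem_filter] at hk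
    exact hg_ne k j (lt_trans hk.2 hij') hkx
  -- key bound b: anything in S other than g i, g j, h j is ≤ b
  have key_b : ∀ x ∈ S, x ≠ g i → x ≠ g j → x ≠ h j → w i x ≤ b := by
    intro x hxS h1 h2 h3
    apply hh_max i
    rw [stage2Pool, Finset.mem_sdiff, Finset.mem_sdiff]
    refine ⟨⟨hSM hxS, fun hc => ?_⟩, fun hc => ?_⟩
    · obtain ⟨k, _, hkx⟩ := Finset.mem_image.mp hc
      rcases hmemY x hxS k (hkx ▸ (hY_picks k).1) with e | e
      · exact h1 (e ▸ hkx.symm)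
      · exact h2 (e ▸ hkx.symm)
    · obtain ⟨k, hk, hkx⟩ := Finset.mem_image.mp hc
      rw [Finset.mem_filter] at hk
      rcases hmemY x hxS k (hkx ▸ (hY_picks k).2) with e | e
      · exact absurd hk.2 (e ▸ lt_irrefl i)
      · exact h3 (e ▸ hkx.symm)
  -- in case j < i, even h j is ≤ b
  have extra_hj : j < i → w i (h j) ≤ b := by
    intro hji
    apply hh_max i
    rw [stage2Pool, Finset.mem_sdiff, Finset.mem_sdiff]
    refine ⟨⟨hhM j, hh_not_img j⟩, fun hc => ?_⟩
    obtain ⟨k, hk, hkx⟩ := Finset.mem_image.mp hc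
    rw [Finset.mem_filter] at hk
    exact hh_ne j k (lt_trans hji hk.2) hkx
  -- lower bound on pd of own bundle
  have hpdY : a + b ≤ pd (w i) (Y i) := by
    have hT : ({g i, h i} : Finset α) ∈ (Y i).powerset.filter (fun T => T.card ≤ 2) := by
      simp only [Finset.mem_filter, Finset.mem_powerset]
      constructor
      · intro x hx
        rcases Finset.mem_insert.mp hx with e | e
        · exact e ▸ (hY_picks i).1
        · exact (Finset.mem_singleton.mp e) ▸ (hY_picks i).2
      · exact le_trans (Finset.card_insert_le _ _) (by simp)
    have hle := Finset.le_sup' (fun T => ∑ x ∈ T, w i x) hT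
    rwa [Finset.sum_pair hgh] at hle
  -- upper bound on mu
  have hmu : mu (pd (w i)) S ≤ a + b := by
    apply Finset.sup'_le
    intro A hA
    rw [Finset.mem_powerset] at hA
    rcases lt_or_gt_of_ne hij with hij' | hji
    · -- i < j : exceptional items E = {g i, g j, h j}, all items ≤ a
      set E : Finset α := {g i, g j, h j} with hE
      have hEcard : E.card ≤ 3 :=
        le_trans (Finset.card_insert_le _ _)
          (by simpa using Nat.add_le_add_right (Finset.card_insert_le (g j) ({h j} : Finset α)) 1)
      have side : ∀ C : Finset α, C ⊆ S → (C ∩ E).card ≤ 1 → pd (w i) C ≤ a + b := by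
        intro C hCS hC1
        haveI : Nonempty α := ⟨g i⟩
        obtain ⟨e, he⟩ := Finset.card_le_one_iff_subset_singleton.mp hC1
        apply pd_le_of (w i) C a b hb0 hba e
        · intro x hx
          by_cases hx1 : x = g j
          · exact hx1 ▸ extra_gj hij'
          · exact key_a x (hCS hx) hx1
        · intro x hx hxe
          have hxE : x ∉ E := by
            intro hxC
            exact hxe (Finset.mem_singleton.mp (he (Finset.mem_inter.mpr ⟨hx, hxC⟩)))
          simp only [hE, Finset.mem_insert, Finset.mem_singleton, not_or] at hxE
          exact key_b x (hCS hx) hxE.1 hxE.2.1 hxE.2.2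
      have hdisj : Disjoint (A ∩ E) ((S \ A) ∩ E) :=
        Finset.disjoint_of_subset_left Finset.inter_subset_left
          (Finset.disjoint_of_subset_right Finset.inter_subset_left Finset.disjoint_sdiff)
      have hsum : (A ∩ E).card + ((S \ A) ∩ E).card ≤ 3 := by
        rw [← Finset.card_union_of_disjoint hdisj]
        exact le_trans (Finset.card_le_card (Finset.union_subset
          Finset.inter_subset_right Finset.inter_subset_right)) hEcard
      by_cases hc : (A ∩ E).card ≤ 1
      · exact le_trans (min_le_left _ _) (side A hA hc)
      · have : ((S \ A) ∩ E).card ≤ 1 := by omega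
        exact le_trans (min_le_right _ _) (side (S \ A) (Finset.sdiff_subset) this)
    · -- j < i : only g j can exceed a; exceptions for b are g i, g j (h j ≤ b)
      have side : ∀ C : Finset α, C ⊆ S → g j ∉ C → pd (w i) C ≤ a + b := by
        intro C hCS hgjC
        apply pd_le_of (w i) C a b hb0 hba (g i)
        · intro x hx
          exact key_a x (hCS hx) (fun e => hgjC (e ▸ hx))
        · intro x hx hxe
          by_cases hx1 : x = h j
          · exact hx1 ▸ extra_hj hji
          · exact key_b x (hCS hx) hxe (fun e => hgjC (e ▸ hx)) hx1
      by_cases hgjA : g j ∈ A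
      · have : g j ∉ S \ A := fun hc => (Finset.mem_sdiff.mp hc).2 hgjA
        exact le_trans (min_le_right _ _) (side (S \ A) Finset.sdiff_subset this)
      · exact le_trans (min_le_left _ _) (side A hA hgjA)
  exact le_trans hmu hpdY
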